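/- Let n ≥ 1. Then the Gutman index of the strong prism B_n² of the linear polyomino chain with n squares satisfies Gut(B_n²) = (392/3)n³ + 364n² + (1102/3)n + 38. -/

import Mathlib

/-- The linear polyomino chain `B_n`, with vertices `u_i = (i, false)` and
`v_i = (i, true)` for `0 ≤ i ≤ n`, edges `u_i u_{i+1}`, `v_i v_{i+1}` and `u_i v_i`. -/
def Bgraph (n : ℕ) : SimpleGraph (Fin (n+1) × Bool) :=
  SimpleGraph.fromRel (fun x y => (x.2 = y.2 ∧ x.1.val + 1 = y.1.val) ∨ (x.1 = y.1))

/-- The strong prism `G ⊠ K₂`: distinct `(x, s)` and `(y, t)` are adjacent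
iff `x = y` or `x` is adjacent to `y` in `G`. -/
def strongPrism {V : Type*} (G : SimpleGraph V) : SimpleGraph (V × Bool) :=
  SimpleGraph.fromRel (fun x y => x.1 = y.1 ∨ G.Adj x.1 y.1)

open scoped Classical in
/-- The Gutman index `Gut(G) = ∑_{{u,w}} d(u)·d(w)·dist(u,w)`, the sum over all
unordered pairs of distinct vertices (written as half of the ordered double sum,
since `dist u u = 0`). -/
noncomputable def gutmanIndex {V : Type*} [Fintype V] (G : SimpleGraph V) : ℝ :=
  (∑ u : V, ∑ w : V, (G.degree u : ℝ) * (G.degree w) * (G.dist u w)) / 2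

def nd (a b : ℕ) : ℕ := (a - b) + (b - a)
def dd {n : ℕ} (x y : Fin (n+1) × Bool) : ℕ :=
  nd x.1.val y.1.val + (if x.2 = y.2 then 0 else 1)
def DD {n : ℕ} (v w : (Fin (n+1) × Bool) × Bool) : ℕ :=
  if v = w then 0 else max (dd v.1 w.1) 1
lemma adj_iff {n : ℕ} (v w : (Fin (n+1) × Bool) × Bool) :
    (strongPrism (Bgraph n)).Adj v w ↔ v ≠ w ∧ dd v.1 w.1 ≤ 1 := by
  obtain ⟨⟨i, b⟩, c⟩ := v
  obtain ⟨⟨j, b'⟩, c'⟩ := w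
  simp only [strongPrism, Bgraph, SimpleGraph.fromRel_adj, dd, nd, ne_eq, Prod.mk.injEq,
    Fin.ext_iff]
  have hi := i.isLt; have hj := j.isLt
  cases b <;> cases b' <;> cases c <;> cases c' <;> simp <;> omega

lemma dd_triangle {n : ℕ} (x y z : Fin (n+1) × Bool) : dd x z ≤ dd x y + dd y z := by
  obtain ⟨i, b⟩ := x; obtain ⟨j, b'⟩ := y; obtain ⟨k, b''⟩ := z
  simp only [dd, nd]
  cases b <;> cases b' <;> cases b'' <;> simp <;> omega

lemma DD_lip {n : ℕ} {v u : (Fin (n+1) × Bool) × Bool}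
    (w : (Fin (n+1) × Bool) × Bool)
    (h : (strongPrism (Bgraph n)).Adj v u) : DD v w ≤ DD u w + 1 := by
  rw [adj_iff] at h
  by_cases hvw : v = w
  · simp [DD, hvw]
  by_cases huw : u = w
  · subst huw
    simp only [DD, if_neg hvw, if_pos rfl]
    have := h.2
    omega
  · simp only [DD, if_neg hvw, if_neg huw]
    have ht := dd_triangle v.1 u.1 w.1
    have := h.2
    omega

lemma DD_le_length {n : ℕ} {v w : (Fin (n+1) × Bool) × Bool}
    (p : (strongPrism (Bgraph n)).Walk v w) : DD v w ≤ p.length := by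
  induction p with
  | nil => simp [DD]
  | @cons a b' c' h p ih =>
    have := DD_lip c' h
    simp only [SimpleGraph.Walk.length_cons]
    omega

lemma step_lemma {n : ℕ} {v w : (Fin (n+1) × Bool) × Bool} (hvw : v ≠ w) :
    ∃ u, (strongPrism (Bgraph n)).Adj v u ∧ DD u w + 1 = DD v w := by
  obtain ⟨⟨i, b⟩, c⟩ := v
  obtain ⟨⟨j, b'⟩, c'⟩ := w
  rcases lt_trichotomy i.val j.val with hij | hij | hij
  · refine ⟨((⟨i.val + 1, by omega⟩, b), c'), ?_, ?_⟩
    · rw [adj_iff]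
      refine ⟨by simp only [ne_eq, Prod.mk.injEq, Fin.ext_iff]; omega, by simp [dd, nd]⟩
    · by_cases hw : ((((⟨i.val + 1, by omega⟩ : Fin (n+1)), b), c') : (Fin (n+1) × Bool) × Bool) = ((j, b'), c')
      · have h1 : i.val + 1 = j.val ∧ b = b' := by
          rw [Prod.ext_iff, Prod.ext_iff, Fin.ext_iff] at hw
          exact ⟨hw.1.1, hw.1.2⟩
        have hne2 : ¬(i = j ∧ c = c') := by
          rintro ⟨rfl, -⟩; omega
        rw [hw]
        simp [DD, dd, nd, hne2, h1.2]
        omega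
      · have hne : ¬(i.val + 1 = j.val ∧ b = b') := by
          rintro ⟨h1, h2⟩
          exact hw (by rw [Prod.ext_iff, Prod.ext_iff, Fin.ext_iff]; exact ⟨⟨h1, h2⟩, rfl⟩)
        simp only [DD, if_neg hw, if_neg hvw, dd, nd]
        by_cases hbb : b = b' <;> simp [hbb] <;> simp [hbb] at hne <;> omega
  · -- i.val = j.val
    have hijF : i = j := Fin.ext hij
    subst hijF
    by_cases hbb : b = b'
    · -- then c ≠ c', take u = w
      subst hbb
      have hcc : c ≠ c' := by rintro rfl; exact hvw rfl
      refine ⟨((i, b), c'), ?_, ?_⟩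
      · rw [adj_iff]
        exact ⟨by simp [Prod.ext_iff, hcc], by simp [dd, nd]⟩
      · simp only [DD, if_pos rfl, if_neg hvw, dd, nd]
        simp [hcc]
    · refine ⟨((i, b'), c'), ?_, ?_⟩
      · rw [adj_iff]
        exact ⟨by simp [Prod.ext_iff, hbb], by simp [dd, nd, hbb]⟩
      · simp only [DD, if_pos rfl, if_neg hvw, dd, nd]
        simp [hbb]
  · refine ⟨((⟨i.val - 1, by omega⟩, b), c'), ?_, ?_⟩
    · rw [adj_iff]
      refine ⟨by simp only [ne_eq, Prod.mk.injEq, Fin.ext_iff]; omega, ?_⟩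
      simp only [dd, nd]
      simp; omega
    · by_cases hw : ((((⟨i.val - 1, by omega⟩ : Fin (n+1)), b), c') : (Fin (n+1) × Bool) × Bool) = ((j, b'), c')
      · have h1 : i.val - 1 = j.val ∧ b = b' := by
          rw [Prod.ext_iff, Prod.ext_iff, Fin.ext_iff] at hw
          exact ⟨hw.1.1, hw.1.2⟩
        have hne2 : ¬(i = j ∧ c = c') := by
          rintro ⟨rfl, -⟩; omega
        rw [hw]
        simp [DD, dd, nd, hne2, h1.2]
        omega
      · have hne : ¬(i.val - 1 = j.val ∧ b = b') := by
          rintro ⟨h1, h2⟩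
          exact hw (by rw [Prod.ext_iff, Prod.ext_iff, Fin.ext_iff]; exact ⟨⟨h1, h2⟩, rfl⟩)
        simp only [DD, if_neg hw, if_neg hvw, dd, nd]
        by_cases hbb : b = b' <;> simp [hbb] <;> simp [hbb] at hne <;> omega

lemma exists_walk {n : ℕ} : ∀ (k : ℕ) (v w : (Fin (n+1) × Bool) × Bool), DD v w = k →
    ∃ p : (strongPrism (Bgraph n)).Walk v w, p.length = k := by
  intro k
  induction k with
  | zero =>
    intro v w h
    have : v = w := by
      by_contra hne
      simp only [DD, if_neg hne] at h
      omega
    subst this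
    exact ⟨SimpleGraph.Walk.nil, rfl⟩
  | succ k ih =>
    intro v w h
    have hne : v ≠ w := by rintro rfl; simp [DD] at h
    obtain ⟨u, hadj, hDD⟩ := step_lemma hne
    obtain ⟨p, hp⟩ := ih u w (by omega)
    exact ⟨SimpleGraph.Walk.cons hadj p, by simp [hp]⟩

lemma dist_eq {n : ℕ} (v w : (Fin (n+1) × Bool) × Bool) :
    (strongPrism (Bgraph n)).dist v w = DD v w := by
  obtain ⟨p, hp⟩ := exists_walk (DD v w) v w rfl
  refine le_antisymm (hp ▸ SimpleGraph.dist_le p) ?_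
  have hr : (strongPrism (Bgraph n)).Reachable v w := ⟨p⟩
  obtain ⟨q, hq⟩ := hr.exists_walk_length_eq_dist
  exact hq ▸ DD_le_length q

lemma deg_eq {n : ℕ} (hn : 1 ≤ n) (v : (Fin (n+1) × Bool) × Bool)
    (inst : Fintype ((strongPrism (Bgraph n)).neighborSet v)) :
    @SimpleGraph.degree _ (strongPrism (Bgraph n)) v inst
      = if v.1.1.val = 0 ∨ v.1.1.val = n then 5 else 7 := by
  classical
  rw [← SimpleGraph.card_neighborSet_eq_degree, ← Set.toFinset_card]
  have hset : ((strongPrism (Bgraph n)).neighborSet v).toFinset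
      = Finset.univ.filter (fun w => w ≠ v ∧ dd v.1 w.1 ≤ 1) := by
    ext w
    simp only [Set.mem_toFinset, SimpleGraph.mem_neighborSet, adj_iff, Finset.mem_filter,
      Finset.mem_univ, true_and, ne_eq]
    constructor
    · rintro ⟨h1, h2⟩; exact ⟨fun h => h1 h.symm, h2⟩
    · rintro ⟨h1, h2⟩; exact ⟨fun h => h1 h.symm, h2⟩
  rw [hset, Finset.card_filter]
  obtain ⟨⟨i, b⟩, c⟩ := v
  rw [Fintype.sum_prod_type, Fintype.sum_prod_type]
  simp only [Fintype.sum_bool]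
  have key : ∀ j : Fin (n+1),
      ((((if ((j, true), true) ≠ ((i, b), c) ∧ dd (i, b) (j, true) ≤ 1 then 1 else 0)
        + (if ((j, true), false) ≠ ((i, b), c) ∧ dd (i, b) (j, true) ≤ 1 then 1 else 0))
        + ((if ((j, false), true) ≠ ((i, b), c) ∧ dd (i, b) (j, false) ≤ 1 then 1 else 0)
        + (if ((j, false), false) ≠ ((i, b), c) ∧ dd (i, b) (j, false) ≤ 1 then 1 else 0)))
        : ℕ) + (if j = i then 1 else 0)
      = (if nd i.val j.val ≤ 1 then 2 else 0) + (if nd i.val j.val = 0 then 2 else 0) := by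
    intro j
    by_cases hji : j = i
    · subst hji
      have h0 : nd j.val j.val = 0 := by simp [nd]
      cases b <;> cases c <;>
        simp [dd, Prod.ext_iff, h0]
    · have hne : i.val ≠ j.val := fun h => hji (Fin.ext h.symm)
      have h0 : nd i.val j.val ≠ 0 := by simp [nd]; omega
      have hA : ¬ (nd i.val j.val + 1 ≤ 1) := by omega
      by_cases hd : nd i.val j.val ≤ 1 <;>
        cases b <;> cases c <;>
        simp [dd, Prod.ext_iff, hji, h0, hA, hd, Fin.ext_iff]
  have H2 := Finset.sum_congr rfl (fun j (_ : j ∈ Finset.univ) => key j)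
  rw [Finset.sum_add_distrib, Finset.sum_ite_eq' Finset.univ i (fun _ => (1:ℕ))] at H2
  simp only [Finset.mem_univ, if_pos] at H2
  rw [Fin.sum_univ_eq_sum_range
    (fun j => (if nd i.val j ≤ 1 then 2 else 0) + (if nd i.val j = 0 then 2 else 0)) (n+1)] at H2
  have hIcc : (Finset.range (n+1)).filter (fun j => nd i.val j ≤ 1)
      = Finset.Icc (i.val - 1) (min (i.val + 1) n) := by
    ext j
    simp only [Finset.mem_filter, Finset.mem_range, Finset.mem_Icc]; simp only [nd]
    omega
  have hsingle : (Finset.range (n+1)).filter (fun j => nd i.val j = 0) = {i.val} := by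
    have := i.isLt
    ext j
    simp only [Finset.mem_filter, Finset.mem_range, Finset.mem_singleton]; simp only [nd]
    omega
  have e3 : ∑ j ∈ Finset.range (n+1),
      ((if nd i.val j ≤ 1 then (2:ℕ) else 0) + (if nd i.val j = 0 then 2 else 0))
      = 2 * (min (i.val + 1) n + 1 - (i.val - 1)) + 2 := by
    rw [Finset.sum_add_distrib, ← Finset.sum_filter, ← Finset.sum_filter, hIcc, hsingle,
      Finset.sum_const, Finset.sum_const, Nat.card_Icc, Finset.card_singleton,
      smul_eq_mul, smul_eq_mul]
    omega
  rw [e3] at H2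
  have hin := i.isLt
  split_ifs with hcase <;> omega


lemma gauss_row (m : ℕ) : 2 * ∑ j ∈ Finset.range (m+1), nd m j = m * (m+1) := by
  have h1 : ∑ j ∈ Finset.range (m+1), nd m j = ∑ j ∈ Finset.range (m+1), (m - j) := by
    refine Finset.sum_congr rfl fun j hj => ?_
    rw [Finset.mem_range] at hj
    simp only [nd]; omega
  have h2 := Finset.sum_range_reflect (fun j => j) (m+1)
  simp only [Nat.add_sub_cancel] at h2
  have h3 := Finset.sum_range_id_mul_two (m+1)
  simp only [Nat.add_sub_cancel] at h3
  rw [h1, h2]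
  zify at h3 ⊢
  linear_combination h3

lemma nd_symm (a b : ℕ) : nd a b = nd b a := by simp [nd]; omega

lemma Tlem (m : ℕ) : 3 * (∑ i ∈ Finset.range m, ∑ j ∈ Finset.range m, nd i j) + m = m^3 := by
  induction m with
  | zero => simp
  | succ p ih =>
    rw [Finset.sum_range_succ]
    have hsplit : ∑ i ∈ Finset.range p, ∑ j ∈ Finset.range (p+1), nd i j
        = (∑ i ∈ Finset.range p, ∑ j ∈ Finset.range p, nd i j)
          + ∑ i ∈ Finset.range p, nd i p := by
      rw [← Finset.sum_add_distrib]
      exact Finset.sum_congr rfl fun i _ => Finset.sum_range_succ _ _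
    rw [hsplit]
    have hr : ∑ i ∈ Finset.range p, nd i p = ∑ j ∈ Finset.range p, nd p j :=
      Finset.sum_congr rfl fun i _ => nd_symm _ _
    have hrow : ∑ j ∈ Finset.range (p+1), nd p j
        = ∑ j ∈ Finset.range p, nd p j + 0 := by
      rw [Finset.sum_range_succ]; simp [nd]
    have hg := gauss_row p
    rw [hrow] at hg
    rw [hrow, hr]
    zify at ih hg ⊢
    linear_combination ih + 3 * hg

lemma hJlem (k : ℕ) : 2 * ∑ j ∈ Finset.Ico 1 (k+1), j = k * (k+1) := by
  induction k with
  | zero => simp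
  | succ p ih =>
    rw [Finset.sum_Ico_succ_top (by omega)]
    zify at ih ⊢
    linear_combination ih

lemma hJRlem (k : ℕ) : 2 * ∑ j ∈ Finset.Ico 1 (k+1), (k + 1 - j) = k * (k+1) := by
  have h1 : ∑ j ∈ Finset.Ico 1 (k+1), (k + 1 - j) = ∑ j ∈ Finset.Ico 1 (k+1), j := by
    rw [Finset.sum_Ico_eq_sum_range, Finset.sum_Ico_eq_sum_range]
    simp only [Nat.add_sub_cancel]
    have h2 := Finset.sum_range_reflect (fun j => 1 + j) k
    rw [← h2]
    refine Finset.sum_congr rfl fun j hj => ?_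
    rw [Finset.mem_range] at hj
    omega
  rw [h1, hJlem]

lemma hMlem (k : ℕ) : ∑ i ∈ Finset.Ico 1 (k+1), ∑ j ∈ Finset.Ico 1 (k+1), nd i j
    = ∑ i ∈ Finset.range k, ∑ j ∈ Finset.range k, nd i j := by
  rw [Finset.sum_Ico_eq_sum_range]
  simp only [Nat.add_sub_cancel]
  refine Finset.sum_congr rfl fun i _ => ?_
  rw [Finset.sum_Ico_eq_sum_range]
  simp only [Nat.add_sub_cancel]
  refine Finset.sum_congr rfl fun j _ => ?_
  simp only [nd]; omega

lemma bigsum (k : ℕ) :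
    3 * ((∑ i ∈ Finset.range (k+2), ∑ j ∈ Finset.range (k+2),
        (if i = 0 ∨ i = k+1 then 5 else 7) * (if j = 0 ∨ j = k+1 then 5 else 7) * (16 * nd i j + 8))
      + ∑ i ∈ Finset.range (k+2), 4 * ((if i = 0 ∨ i = k+1 then 5 else 7) * (if i = 0 ∨ i = k+1 then 5 else 7)))
    = 784*(k+1)^3 + 2184*(k+1)^2 + 2204*(k+1) + 228 := by
  have hrange : Finset.range (k+2) = insert 0 (insert (k+1) (Finset.Ico 1 (k+1))) := by
    ext x; simp; omega
  have h1 : (0:ℕ) ∉ insert (k+1) (Finset.Ico 1 (k+1)) := by simp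
  have h2 : k+1 ∉ Finset.Ico 1 (k+1) := by simp
  rw [hrange]
  simp only [Finset.sum_insert h1, Finset.sum_insert h2]
  norm_num
  have hno : ∀ x ∈ Finset.Ico 1 (k+1), ¬(x = 0 ∨ x = k+1) := by
    intro x hx; rw [Finset.mem_Ico] at hx; omega
  have hcard : (Finset.Ico 1 (k+1)).card = k := by simp
  have hA : ∑ x ∈ Finset.Ico 1 (k+1),
      (if x = 0 ∨ x = k + 1 then 25 * (16 * nd 0 x + 8) else 35 * (16 * nd 0 x + 8))
      = 560 * (∑ x ∈ Finset.Ico 1 (k+1), x) + 280 * k := by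
    rw [Finset.sum_congr rfl (fun x hx => show _ = 560 * x + 280 by
      rw [if_neg (hno x hx)]; simp only [nd]; omega)]
    rw [Finset.sum_add_distrib, ← Finset.mul_sum, Finset.sum_const, hcard, smul_eq_mul, mul_comm k 280]
  have hB : ∑ x ∈ Finset.Ico 1 (k+1),
      (if x = 0 ∨ x = k + 1 then 25 * (16 * nd (k+1) x + 8) else 35 * (16 * nd (k+1) x + 8))
      = 560 * (∑ x ∈ Finset.Ico 1 (k+1), (k+1-x)) + 280 * k := by
    rw [Finset.sum_congr rfl (fun x hx => show _ = 560 * (k+1-x) + 280 by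
      rw [if_neg (hno x hx)]
      have hx' := Finset.mem_Ico.mp hx
      simp only [nd]; omega)]
    rw [Finset.sum_add_distrib, ← Finset.mul_sum, Finset.sum_const, hcard, smul_eq_mul, mul_comm k 280]
  have hC : ∑ x ∈ Finset.Ico 1 (k+1),
      ((if x = 0 ∨ x = k + 1 then 25 * (16 * nd x 0 + 8) else 35 * (16 * nd x 0 + 8)) +
        ((if x = 0 ∨ x = k + 1 then 25 * (16 * nd x (k + 1) + 8) else 35 * (16 * nd x (k + 1) + 8)) +
          ∑ y ∈ Finset.Ico 1 (k + 1),
            (if y = 0 ∨ y = k + 1 then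
              if x = 0 ∨ x = k + 1 then 25 * (16 * nd x y + 8) else 35 * (16 * nd x y + 8)
            else if x = 0 ∨ x = k + 1 then 35 * (16 * nd x y + 8) else 49 * (16 * nd x y + 8))))
      = 560 * (∑ x ∈ Finset.Ico 1 (k+1), x) + 560 * (∑ x ∈ Finset.Ico 1 (k+1), (k+1-x))
        + 784 * (∑ x ∈ Finset.Ico 1 (k+1), ∑ y ∈ Finset.Ico 1 (k+1), nd x y)
        + (560 + 392 * k) * k := by
    rw [Finset.sum_congr rfl (fun x hx => show _ =
        560 * x + (560 * (k+1-x) + (784 * (∑ y ∈ Finset.Ico 1 (k+1), nd x y) + (560 + 392 * k))) from ?_)]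
    · rw [Finset.sum_add_distrib, Finset.sum_add_distrib, Finset.sum_add_distrib,
        ← Finset.mul_sum, ← Finset.mul_sum, ← Finset.mul_sum, Finset.sum_const, hcard, smul_eq_mul]
      ring
    · have hinner : ∑ y ∈ Finset.Ico 1 (k + 1),
          (if y = 0 ∨ y = k + 1 then
            if x = 0 ∨ x = k + 1 then 25 * (16 * nd x y + 8) else 35 * (16 * nd x y + 8)
          else if x = 0 ∨ x = k + 1 then 35 * (16 * nd x y + 8) else 49 * (16 * nd x y + 8))
          = 784 * (∑ y ∈ Finset.Ico 1 (k+1), nd x y) + 392 * k := by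
        rw [Finset.sum_congr rfl (fun y hy => show _ = 784 * nd x y + 392 by
          rw [if_neg (hno y hy), if_neg (hno x hx)]; omega)]
        rw [Finset.sum_add_distrib, ← Finset.mul_sum, Finset.sum_const, hcard, smul_eq_mul, mul_comm k 392]
      rw [hinner, if_neg (hno x hx), if_neg (hno x hx)]
      have hx' : 1 ≤ x ∧ x < k + 1 := by rw [Finset.mem_Ico] at hx; exact hx
      have e1 : nd x 0 = x := by simp only [nd]; omega
      have e2 : nd x (k+1) = k + 1 - x := by simp only [nd]; omega
      rw [e1, e2]
      omega
  have hD : ∑ x ∈ Finset.Ico 1 (k + 1),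
      (if x = 0 ∨ x = k + 1 then if x = 0 ∨ x = k + 1 then 100 else 140
        else if x = 0 ∨ x = k + 1 then 140 else 196) = 196 * k := by
    rw [Finset.sum_congr rfl (fun x hx => show _ = 196 by rw [if_neg (hno x hx), if_neg (hno x hx)])]
    rw [Finset.sum_const, hcard, smul_eq_mul, mul_comm k 196]
  rw [hA, hB, hC, hD]
  have c1 : nd 0 0 = 0 := by simp [nd]
  have c2 : nd 0 (k+1) = k+1 := by simp [nd]
  have c3 : nd (k+1) 0 = k+1 := by simp [nd]
  have c4 : nd (k+1) (k+1) = 0 := by simp [nd]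
  rw [c1, c2, c3, c4]
  have hJ := hJlem k
  have hJR := hJRlem k
  have hM3 : 3 * (∑ x ∈ Finset.Ico 1 (k+1), ∑ y ∈ Finset.Ico 1 (k+1), nd x y) + k = k^3 := by
    rw [hMlem]; exact Tlem k
  zify at hJ hJR hM3 ⊢
  linear_combination 1680 * hJ + 1680 * hJR + 784 * hM3

lemma DD_eval {n : ℕ} (i j : Fin (n+1)) (b c b' c' : Bool) :
    DD ((i,b),c) ((j,b'),c')
      = if i = j ∧ b = b' ∧ c = c' then 0
        else max (nd i.val j.val + (if b = b' then 0 else 1)) 1 := by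
  simp [DD, dd, Prod.ext_iff, and_assoc]

lemma pair_sum {m : ℕ} (i j : Fin (m+1)) :
    (((if (i:ℕ) = 0 ∨ (i:ℕ) = m then 5 else 7) * if (j:ℕ) = 0 ∨ (j:ℕ) = m then 5 else 7) *
          DD ((i, true), true) ((j, true), true) +
        ((if (i:ℕ) = 0 ∨ (i:ℕ) = m then 5 else 7) * if (j:ℕ) = 0 ∨ (j:ℕ) = m then 5 else 7) *
          DD ((i, true), true) ((j, true), false) +
      (((if (i:ℕ) = 0 ∨ (i:ℕ) = m then 5 else 7) * if (j:ℕ) = 0 ∨ (j:ℕ) = m then 5 else 7) *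
          DD ((i, true), true) ((j, false), true) +
        ((if (i:ℕ) = 0 ∨ (i:ℕ) = m then 5 else 7) * if (j:ℕ) = 0 ∨ (j:ℕ) = m then 5 else 7) *
          DD ((i, true), true) ((j, false), false))) +
    (((if (i:ℕ) = 0 ∨ (i:ℕ) = m then 5 else 7) * if (j:ℕ) = 0 ∨ (j:ℕ) = m then 5 else 7) *
          DD ((i, true), false) ((j, true), true) +
        ((if (i:ℕ) = 0 ∨ (i:ℕ) = m then 5 else 7) * if (j:ℕ) = 0 ∨ (j:ℕ) = m then 5 else 7) *
          DD ((i, true), false) ((j, true), false) +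
      (((if (i:ℕ) = 0 ∨ (i:ℕ) = m then 5 else 7) * if (j:ℕ) = 0 ∨ (j:ℕ) = m then 5 else 7) *
          DD ((i, true), false) ((j, false), true) +
        ((if (i:ℕ) = 0 ∨ (i:ℕ) = m then 5 else 7) * if (j:ℕ) = 0 ∨ (j:ℕ) = m then 5 else 7) *
          DD ((i, true), false) ((j, false), false))) +
    ((((if (i:ℕ) = 0 ∨ (i:ℕ) = m then 5 else 7) * if (j:ℕ) = 0 ∨ (j:ℕ) = m then 5 else 7) *
          DD ((i, false), true) ((j, true), true) +
        ((if (i:ℕ) = 0 ∨ (i:ℕ) = m then 5 else 7) * if (j:ℕ) = 0 ∨ (j:ℕ) = m then 5 else 7) *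
          DD ((i, false), true) ((j, true), false) +
      (((if (i:ℕ) = 0 ∨ (i:ℕ) = m then 5 else 7) * if (j:ℕ) = 0 ∨ (j:ℕ) = m then 5 else 7) *
          DD ((i, false), true) ((j, false), true) +
        ((if (i:ℕ) = 0 ∨ (i:ℕ) = m then 5 else 7) * if (j:ℕ) = 0 ∨ (j:ℕ) = m then 5 else 7) *
          DD ((i, false), true) ((j, false), false))) +
    (((if (i:ℕ) = 0 ∨ (i:ℕ) = m then 5 else 7) * if (j:ℕ) = 0 ∨ (j:ℕ) = m then 5 else 7) *
          DD ((i, false), false) ((j, true), true) +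
        ((if (i:ℕ) = 0 ∨ (i:ℕ) = m then 5 else 7) * if (j:ℕ) = 0 ∨ (j:ℕ) = m then 5 else 7) *
          DD ((i, false), false) ((j, true), false) +
      (((if (i:ℕ) = 0 ∨ (i:ℕ) = m then 5 else 7) * if (j:ℕ) = 0 ∨ (j:ℕ) = m then 5 else 7) *
          DD ((i, false), false) ((j, false), true) +
        ((if (i:ℕ) = 0 ∨ (i:ℕ) = m then 5 else 7) * if (j:ℕ) = 0 ∨ (j:ℕ) = m then 5 else 7) *
          DD ((i, false), false) ((j, false), false))))
    = ((if (i:ℕ) = 0 ∨ (i:ℕ) = m then 5 else 7) * if (j:ℕ) = 0 ∨ (j:ℕ) = m then 5 else 7) *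
        (16 * nd ↑i ↑j + 8)
      + (if i = j then
          4 * ((if (i:ℕ) = 0 ∨ (i:ℕ) = m then 5 else 7) * if (j:ℕ) = 0 ∨ (j:ℕ) = m then 5 else 7)
        else 0) := by
  by_cases hij : i = j
  · subst hij
    have h0 : nd i.val i.val = 0 := by simp [nd]
    simp [DD_eval, h0]
    split_ifs <;> norm_num
  · have hv : ¬((i:ℕ) = (j:ℕ)) := fun h => hij (Fin.ext h)
    have h1 : 1 ≤ nd ↑i ↑j := by simp only [nd]; omega
    have hmax : ∀ e : ℕ, max (nd ↑i ↑j + e) 1 = nd ↑i ↑j + e := fun e => by omega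
    have hmax0 : max (nd ↑i ↑j) 1 = nd ↑i ↑j := by omega
    simp [DD_eval, hij, hmax, hmax0]
    split_ifs <;> ring

/-- For `n ≥ 1`, `Gut(B_n²) = (392/3)n³ + 364n² + (1102/3)n + 38`. -/
theorem gutmanIndex_strongPrism_Bgraph (n : ℕ) (hn : 1 ≤ n) :
    gutmanIndex (strongPrism (Bgraph n))
      = 392/3 * (n : ℝ)^3 + 364 * (n : ℝ)^2 + 1102/3 * (n : ℝ) + 38 := by
  obtain ⟨k, rfl⟩ : ∃ k, n = k + 1 := ⟨n - 1, by omega⟩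
  unfold gutmanIndex
  simp only [dist_eq, deg_eq (show 1 ≤ k+1 by omega)]
  have hnat : 3 * (∑ u : (Fin (k + 1 + 1) × Bool) × Bool,
      ∑ w : (Fin (k + 1 + 1) × Bool) × Bool,
        (if (u.1.1:ℕ) = 0 ∨ (u.1.1:ℕ) = k + 1 then 5 else 7) *
          (if (w.1.1:ℕ) = 0 ∨ (w.1.1:ℕ) = k + 1 then 5 else 7) * DD u w)
      = 784*(k+1)^3 + 2184*(k+1)^2 + 2204*(k+1) + 228 := by
    simp only [Fintype.sum_prod_type, Fintype.sum_bool]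
    simp only [← Finset.sum_add_distrib]
    rw [Finset.sum_congr rfl (fun x _ => Finset.sum_congr rfl (fun y _ => pair_sum x y))]
    simp only [Finset.sum_add_distrib, Finset.sum_ite_eq, Finset.mem_univ, ite_true]
    have hin : ∀ x : Fin (k+1+1),
        (∑ y : Fin (k+1+1), ((if (x:ℕ) = 0 ∨ (x:ℕ) = k+1 then 5 else 7) *
            if (y:ℕ) = 0 ∨ (y:ℕ) = k+1 then 5 else 7) * (16 * nd ↑x ↑y + 8))
        = ∑ j ∈ Finset.range (k+1+1), ((if (x:ℕ) = 0 ∨ (x:ℕ) = k+1 then 5 else 7) *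
            if j = 0 ∨ j = k+1 then 5 else 7) * (16 * nd ↑x j + 8) :=
      fun x => Fin.sum_univ_eq_sum_range (fun j => ((if (x:ℕ) = 0 ∨ (x:ℕ) = k+1 then 5 else 7) *
            if j = 0 ∨ j = k+1 then 5 else 7) * (16 * nd ↑x j + 8)) (k+1+1)
    rw [Finset.sum_congr rfl fun x _ => hin x]
    rw [Fin.sum_univ_eq_sum_range (fun i => ∑ j ∈ Finset.range (k+1+1),
        ((if i = 0 ∨ i = k+1 then 5 else 7) * if j = 0 ∨ j = k+1 then 5 else 7) * (16 * nd i j + 8)) (k+1+1)]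
    rw [Fin.sum_univ_eq_sum_range (fun i =>
        4 * ((if i = 0 ∨ i = k+1 then 5 else 7) * if i = 0 ∨ i = k+1 then 5 else 7)) (k+1+1)]
    exact bigsum k
  have key : (∑ x : (Fin (k + 1 + 1) × Bool) × Bool,
      ∑ y : (Fin (k + 1 + 1) × Bool) × Bool,
        (Nat.cast (if (x.1.1:ℕ) = 0 ∨ (x.1.1:ℕ) = k + 1 then (5:ℕ) else 7) : ℝ) *
          (Nat.cast (if (y.1.1:ℕ) = 0 ∨ (y.1.1:ℕ) = k + 1 then (5:ℕ) else 7) : ℝ) *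
          (Nat.cast (DD x y) : ℝ))
      = ((∑ x : (Fin (k + 1 + 1) × Bool) × Bool,
          ∑ y : (Fin (k + 1 + 1) × Bool) × Bool,
            (if (x.1.1:ℕ) = 0 ∨ (x.1.1:ℕ) = k + 1 then 5 else 7) *
              (if (y.1.1:ℕ) = 0 ∨ (y.1.1:ℕ) = k + 1 then 5 else 7) * DD x y : ℕ) : ℝ) := by
    push_cast
    rfl
  rw [key]
  have h3 : (3:ℝ) * ((∑ x : (Fin (k + 1 + 1) × Bool) × Bool,
      ∑ y : (Fin (k + 1 + 1) × Bool) × Bool,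
        (if (x.1.1:ℕ) = 0 ∨ (x.1.1:ℕ) = k + 1 then 5 else 7) *
          (if (y.1.1:ℕ) = 0 ∨ (y.1.1:ℕ) = k + 1 then 5 else 7) * DD x y : ℕ) : ℝ)
      = 784*(((k+1:ℕ)):ℝ)^3 + 2184*(((k+1:ℕ)):ℝ)^2 + 2204*(((k+1:ℕ)):ℝ) + 228 := by
    exact_mod_cast congrArg (fun t : ℕ => (t:ℝ)) hnat
  linear_combination h3 / 6
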